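/- Let T be a rigid object in the skeletally small category C and let L_S : C → C_S be the localisation of C at the class S. If U is an object of C(T) and V is any object of C, then the map Hom_C(U, V) → Hom_{C_S}(U, V) induced by L_S is surjective. -/

import Mathlib

/-!
Common setup: `C` is a Hom-finite, Krull-Schmidt (= idempotent complete, given
Hom-finiteness over a field), `k`-linear triangulated category with suspension
functor `Σ = shiftFunctor C (1 : ℤ)`, and `T` is a rigid object of `C`.
-/

noncomputable section

open CategoryTheory CategoryTheory.Limits CategoryTheory.Pretriangulated

universe v u

namespace PaperBM

variable {C : Type u} [Category.{v} C] [Preadditive C] [HasZeroObject C]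
  [HasShift C ℤ] [∀ n : ℤ, (shiftFunctor C n).Additive] [Pretriangulated C]
  [HasFiniteBiproducts C]

/-- `X` lies in `add T`: it is a direct summand of a finite direct sum of copies of `T`. -/
def memAdd (T X : C) : Prop :=
  ∃ (n : ℕ) (s : X ⟶ ⨁ (fun _ : Fin n => T)) (r : (⨁ fun _ : Fin n => T) ⟶ X), s ≫ r = 𝟙 X

/-- `T` is rigid: `Hom_C(T, ΣT) = 0`. -/
def IsRigidObj (T : C) : Prop := ∀ f : T ⟶ (shiftFunctor C (1 : ℤ)).obj T, f = 0

/-- `Y ∈ T^⊥`, i.e. `Hom_C(X, ΣY) = 0` for all `X ∈ add T`. -/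
def memTperp (T Y : C) : Prop :=
  ∀ (X : C), memAdd T X → ∀ f : X ⟶ (shiftFunctor C (1 : ℤ)).obj Y, f = 0

/-- `Y ∈ ⊥T`, i.e. `Hom_C(Y, ΣX) = 0` for all `X ∈ add T`. -/
def memPerpT (T Y : C) : Prop :=
  ∀ (X : C), memAdd T X → ∀ f : Y ⟶ (shiftFunctor C (1 : ℤ)).obj X, f = 0

/-- `Y ∈ ΣT^⊥`, the image of `T^⊥` under the suspension `Σ`. -/
def memSigmaTperp (T Y : C) : Prop :=
  ∃ Z : C, memTperp T Z ∧ Nonempty (Y ≅ (shiftFunctor C (1 : ℤ)).obj Z)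

/-- The map `f` factors through an object belonging to the class `P` of objects. -/
def FactorsThru (P : C → Prop) {A B : C} (f : A ⟶ B) : Prop :=
  ∃ (Z : C) (g : A ⟶ Z) (h : Z ⟶ B), P Z ∧ g ≫ h = f

/-- The class `S̃` of maps `f : X ⟶ Y` such that in a completion
`Σ⁻¹Z →h X →f Y →g Z` of `f` to a triangle (where `A` plays the role of `Σ⁻¹Z`,
so that `Z = ΣA`), both `g` and `h` factor through an object of `ΣT^⊥`. -/
def Stilde (T : C) : MorphismProperty C := fun X Y f =>
  ∃ (A : C) (h : A ⟶ X) (g : Y ⟶ (shiftFunctor C (1 : ℤ)).obj A),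
    (Triangle.mk h f g ∈ distTriang C) ∧
    FactorsThru (memSigmaTperp T) g ∧ FactorsThru (memSigmaTperp T) h

/-- The class `S` of maps `f : X ⟶ Y` such that in a completion
`Σ⁻¹Z →h X →f Y →g Z` of `f` to a triangle (where `A` plays the role of `Σ⁻¹Z`,
so that `Z = ΣA`), `g` factors through an object of `ΣT^⊥` and `Σ⁻¹Z ∈ ΣT^⊥`. -/
def Sclass (T : C) : MorphismProperty C := fun X Y f =>
  ∃ (A : C) (h : A ⟶ X) (g : Y ⟶ (shiftFunctor C (1 : ℤ)).obj A),
    (Triangle.mk h f g ∈ distTriang C) ∧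
    FactorsThru (memSigmaTperp T) g ∧ memSigmaTperp T A

/-- `X ∈ C(T)`: there is a triangle `T₁ → T₀ → X → ΣT₁` with `T₀, T₁ ∈ add T`. -/
def memCT (T X : C) : Prop :=
  ∃ (T₁ T₀ : C) (a : T₁ ⟶ T₀) (b : T₀ ⟶ X) (c : X ⟶ (shiftFunctor C (1 : ℤ)).obj T₁),
    memAdd T T₁ ∧ memAdd T T₀ ∧ (Triangle.mk a b c ∈ distTriang C)

/-- `f : X₀ ⟶ Y` is a right `P`-approximation of `Y`. -/
def IsRightApprox (P : C → Prop) {X₀ Y : C} (f : X₀ ⟶ Y) : Prop :=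
  P X₀ ∧ ∀ (W : C), P W → ∀ g : W ⟶ Y, ∃ g' : W ⟶ X₀, g' ≫ f = g

/-- `f : Y ⟶ X₀` is a left `P`-approximation of `Y`. -/
def IsLeftApprox (P : C → Prop) {Y X₀ : C} (f : Y ⟶ X₀) : Prop :=
  P X₀ ∧ ∀ (W : C), P W → ∀ g : Y ⟶ W, ∃ g' : X₀ ⟶ W, f ≫ g' = g

/-- The map `f : X₀ ⟶ Y` is right minimal. -/
def IsRightMinimal {X₀ Y : C} (f : X₀ ⟶ Y) : Prop :=
  ∀ g : X₀ ⟶ X₀, g ≫ f = f → IsIso g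

/-- The functor `H = Hom_C(T, -) : C ⥤ Mod End_C(T)ᵒᵖ`.  Here, with Mathlib's
conventions, the endomorphism ring `End (Opposite.op T)` of `T` viewed in `Cᵒᵖ` plays
the role of `End_C(T)ᵒᵖ`, so that each `Hom_C(T, X)` is a left module over it. -/
abbrev homFunctor (T : C) : C ⥤ ModuleCat.{v} (End (Opposite.op T)) :=
  preadditiveCoyonedaObj T ⋙ ModuleCat.restrictScalars.{v}
    ({ toFun := fun r => MulOpposite.op r.unop
       map_one' := rfl
       map_mul' := fun _ _ => rfl
       map_zero' := rfl
       map_add' := fun _ _ => rfl } : End (Opposite.op T) →+* (End T)ᵐᵒᵖ)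

/-- The predicate on `End_C(T)ᵒᵖ`-modules of being finite-dimensional (equivalently,
since `End_C(T)` is a finite-dimensional algebra, finitely generated). -/
abbrev isFinDim (T : C) : ModuleCat.{v} (End (Opposite.op T)) → Prop :=
  fun M => Module.Finite (End (Opposite.op T)) M

/-- The category `mod End_C(T)ᵒᵖ` of finite-dimensional `End_C(T)ᵒᵖ`-modules. -/
abbrev fdMod (T : C) := ObjectProperty.FullSubcategory (isFinDim T)

/-- The ideal relation on `C(T)` of maps factoring through an object of `ΣT^⊥`. -/
def homRelCT (T : C) : HomRel (ObjectProperty.FullSubcategory (memCT T)) :=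
  fun A B f g => FactorsThru (memSigmaTperp T) (((f - g).hom : A.obj ⟶ B.obj))

/-- The ideal relation on `C(T)` of maps factoring through an object of `add ΣT`. -/
def homRelCTadd (T : C) : HomRel (ObjectProperty.FullSubcategory (memCT T)) :=
  fun A B f g => FactorsThru (memAdd ((shiftFunctor C (1 : ℤ)).obj T)) (((f - g).hom : A.obj ⟶ B.obj))

/-- The ideal relation on `C` of maps factoring through an object of `add ΣT`. -/
def homRelAdd (T : C) : HomRel C :=
  fun A B f g => FactorsThru (memAdd ((shiftFunctor C (1 : ℤ)).obj T)) (f - g)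

/-- Key lemma: if `U ∈ C(T)` and `s : X ⟶ Y` lies in `S`, every `g : U ⟶ Y`
factors through `s` already in `C`. -/
lemma key_factor (T : C) {U : C} (hU : memCT T U) {X Y : C} (s : X ⟶ Y)
    (hs : Sclass T s) (g : U ⟶ Y) : ∃ f : U ⟶ X, f ≫ s = g := by
  obtain ⟨A, h, gA, hTri, hFact, hA⟩ := hs
  obtain ⟨Wo, g₁, g₂, hWo, hfac⟩ := hFact
  obtain ⟨Z, hZ, ⟨e⟩⟩ := hWo
  obtain ⟨Z', hZ', ⟨e'⟩⟩ := hA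
  obtain ⟨T₁, T₀, a, b, c, hT₁, hT₀, hUtri⟩ := hU
  have hb : b ≫ g ≫ g₁ = 0 := by
    have h0 : (b ≫ g ≫ g₁) ≫ e.hom = 0 := hZ T₀ hT₀ _
    have h1 := congrArg (fun t => t ≫ e.inv) h0
    simpa using h1
  obtain ⟨v, hv⟩ := Pretriangulated.Triangle.yoneda_exact₃ _ hUtri (g ≫ g₁) hb
  have hvg : v ≫ g₂ = 0 := by
    have h1 : (v ≫ g₂) ≫ (shiftFunctor C (1 : ℤ)).map e'.hom = 0 := by
      obtain ⟨x, hx⟩ := (shiftFunctor C (1 : ℤ)).map_surjective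
        ((v ≫ g₂) ≫ (shiftFunctor C (1 : ℤ)).map e'.hom)
      rw [← hx, hZ' T₁ hT₁ x]; exact (shiftFunctor C (1 : ℤ)).map_zero _ _
    have h2 := congrArg (fun t => t ≫ (shiftFunctor C (1 : ℤ)).map e'.inv) h1
    simpa [← Functor.map_comp] using h2
  have hg0 : g ≫ gA = 0 := by
    rw [← hfac]; exact (Category.assoc _ _ _).symm.trans ((congrArg (· ≫ g₂) hv).trans ((Category.assoc _ _ _).trans (by rw [hvg]; exact comp_zero)))
  obtain ⟨f, hf⟩ := Pretriangulated.Triangle.coyoneda_exact₃ _ hTri g hg0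
  exact ⟨f, hf.symm⟩

end PaperBM

open PaperBM

/-- If `U ∈ C(T)` and `V` is any object of `C`, then the map
`Hom_C(U, V) → Hom_{C_S}(U, V)` induced by the localisation functor `L_S` is
surjective. -/
theorem statement_13 {C : Type u} [Category.{v} C] [Preadditive C] [HasZeroObject C]
    [HasShift C ℤ] [∀ n : ℤ, (shiftFunctor C n).Additive] [Pretriangulated C]
    [HasFiniteBiproducts C]
    {k : Type*} [Field k] [CategoryTheory.Linear k C]
    [∀ X Y : C, FiniteDimensional k (X ⟶ Y)] [IsIdempotentComplete C]
    [EssentiallySmall.{v} C] (T : C) (hT : IsRigidObj T)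
    {U : C} (hU : memCT T U) (V : C) :
    Function.Surjective (fun f : U ⟶ V => (Sclass T).Q.map f) := by
  intro phi
  let W : CategoryTheory.MorphismProperty C := Sclass T
  let P : CategoryTheory.MorphismProperty W.Localization := fun A B f =>
    ∀ g : U ⟶ A.as.obj, ∃ f' : U ⟶ B.as.obj, W.Q.map f' = W.Q.map g ≫ f
  haveI : P.IsStableUnderComposition := ⟨by
    intro A B D f₁ f₂ h₁ h₂ g
    obtain ⟨f', hf'⟩ := h₁ g
    obtain ⟨f'', hf''⟩ := h₂ f'
    exact ⟨f'', by rw [hf'', hf']; exact Category.assoc _ _ _⟩⟩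
  have htop : P = ⊤ := by
    apply Localization.Construction.morphismProperty_eq_top
    · intro X Y f g
      exact ⟨g ≫ f, W.Q.map_comp g f⟩
    · intro X Y w hw g
      obtain ⟨f, hf⟩ := key_factor T hU w hw g
      refine ⟨f, ?_⟩
      have : W.Q.map g = W.Q.map f ≫ (Localization.Construction.wIso w hw).hom := by
        rw [← hf]; exact W.Q.map_comp f w
      rw [this]; exact ((Category.assoc _ _ _).trans ((congrArg (W.Q.map f ≫ ·) (Localization.Construction.wIso w hw).hom_inv_id).trans (Category.comp_id _))).symm
  have hP : P phi := by rw [htop]; trivial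
  obtain ⟨f, hf⟩ := hP (𝟙 U)
  refine ⟨f, ?_⟩
  show W.Q.map f = phi
  rw [hf]; exact (congrArg (· ≫ phi) (W.Q.map_id U)).trans (Category.id_comp phi)
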